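/- arXiv:0709.2340 — 8 statements merged into one kernel-verified Lean document; each statement's English description precedes it below -/
import Mathlib

section
/- Let {W_i}_{i=1}^N be a fusion frame for ℝ^M with bounds 0 < A ≤ B and projections P_1,…,P_N, let σ_n > 0, and let R be a positive definite M×M real matrix with eigenvalues 0 < λ_1 ≤ λ_2 ≤ … ≤ λ_M (with multiplicity). Then Σ_{i=1}^M 1/(1/λ_i + B/σ_n²) ≤ tr[(R^{-1} + σ_n^{-2} Σ_{j=1}^N P_j)^{-1}] ≤ Σ_{i=1}^M 1/(1/λ_i + A/σ_n²). -/
open Matrix BigOperators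

open Matrix

variable {m : Type*} [Fintype m] [DecidableEq m]

lemma psd_smul {c : ℝ} (hc : 0 ≤ c) {X : Matrix m m ℝ} (hX : X.PosSemidef) :
    (c • X).PosSemidef := by
  refine ⟨by rw [Matrix.IsHermitian, Matrix.conjTranspose_smul, star_trivial, hX.1.eq],
    fun x => ?_⟩
  exact (hX.smul hc).2 x

lemma psd_trace_nonneg {X : Matrix m m ℝ} (hX : X.PosSemidef) : 0 ≤ X.trace := by
  refine Finset.sum_nonneg fun i _ => ?_
  have := hX.dotProduct_mulVec_nonneg (Pi.single i 1)
  simpa using this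

lemma trace_mono {X Y : Matrix m m ℝ} (h : (Y - X).PosSemidef) : X.trace ≤ Y.trace := by
  have := psd_trace_nonneg h
  rw [trace_sub] at this
  linarith

lemma inv_sub_inv_psd {X Y : Matrix m m ℝ} (hX : X.PosDef) (h : (Y - X).PosSemidef) :
    (X⁻¹ - Y⁻¹).PosSemidef := by
  have hY : Y.PosDef := by
    have := hX.add_posSemidef h
    simpa using this
  have hXi := hX.isUnit.invertible
  have hYi := hY.isUnit.invertible
  set D := Y - X with hD
  have hDH : Dᴴ = D := h.1
  have hM : (D + Dᴴ * X⁻¹ * D).PosSemidef :=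
    h.add (hX.inv.posSemidef.conjTranspose_mul_mul_same D)
  have key : X⁻¹ - Y⁻¹ = (Y⁻¹)ᴴ * (D + Dᴴ * X⁻¹ * D) * Y⁻¹ := by
    rw [hDH, hD, hY.inv.isHermitian.eq]
    have expand : ((Y - X) + (Y - X) * X⁻¹ * (Y - X)) = Y * X⁻¹ * Y - Y := by
      have h' : (Y - X) * X⁻¹ * (Y - X)
          = Y * X⁻¹ * Y - Y * X⁻¹ * X - X * X⁻¹ * Y + X * X⁻¹ * X := by noncomm_ring
      rw [h', Matrix.mul_inv_of_invertible, mul_assoc Y X⁻¹ X,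
        Matrix.inv_mul_of_invertible]
      noncomm_ring
    rw [expand]
    simp only [Matrix.mul_sub, Matrix.sub_mul, Matrix.mul_assoc,
      Matrix.inv_mul_cancel_left_of_invertible, Matrix.mul_inv_of_invertible, Matrix.mul_one]
  rw [key]
  exact hM.conjTranspose_mul_mul_same _

lemma trace_inv_add_smul_one {M : ℕ} (R : Matrix (Fin M) (Fin M) ℝ) (hR : R.PosDef)
    (c : ℝ) (hc : 0 < c) :
    Matrix.trace ((R⁻¹ + c • (1 : Matrix (Fin M) (Fin M) ℝ))⁻¹) =
      ∑ i, 1 / (1 / hR.1.eigenvalues i + c) := by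
  set U : Matrix (Fin M) (Fin M) ℝ := (hR.1.eigenvectorUnitary : Matrix (Fin M) (Fin M) ℝ)
  have hsU : star U * U = 1 := Matrix.mem_unitaryGroup_iff'.mp hR.1.eigenvectorUnitary.2
  have hUs : U * star U = 1 := Matrix.mem_unitaryGroup_iff.mp hR.1.eigenvectorUnitary.2
  set lam := hR.1.eigenvalues
  have hlam : ∀ i, 0 < lam i := hR.eigenvalues_pos
  have hconj_inv : ∀ v : Fin M → ℝ, (∀ i, v i ≠ 0) →
      (U * diagonal v * star U)⁻¹ = U * diagonal v⁻¹ * star U := by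
    intro v hv
    apply Matrix.inv_eq_right_inv
    calc U * diagonal v * star U * (U * diagonal v⁻¹ * star U)
        = U * diagonal v * (star U * U) * diagonal v⁻¹ * star U := by noncomm_ring
      _ = U * (diagonal v * diagonal v⁻¹) * star U := by rw [hsU]; noncomm_ring
      _ = 1 := by
          rw [diagonal_mul_diagonal]
          have hvv : (fun i => v i * v⁻¹ i) = (1 : Fin M → ℝ) :=
            funext fun i => by simp [hv i]
          rw [hvv, show diagonal (1 : Fin M → ℝ) = 1 from Matrix.diagonal_one,
            Matrix.mul_one, hUs]
  have hspec : R = U * diagonal lam * star U := by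
    have := hR.1.spectral_theorem
    simpa using this
  have hRinv : R⁻¹ = U * diagonal lam⁻¹ * star U := by
    rw [hspec, hconj_inv lam fun i => (hlam i).ne']
  have hone : c • (1 : Matrix (Fin M) (Fin M) ℝ) = U * diagonal (fun _ => c) * star U := by
    rw [show (diagonal (fun _ : Fin M => c)) = c • (1 : Matrix (Fin M) (Fin M) ℝ) from
      (Matrix.smul_one_eq_diagonal c).symm, Matrix.mul_smul, Matrix.mul_one, Matrix.smul_mul,
      hUs]
  have hsum : R⁻¹ + c • (1 : Matrix (Fin M) (Fin M) ℝ)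
      = U * diagonal (fun i => (lam i)⁻¹ + c) * star U := by
    rw [hRinv, hone, ← Matrix.add_mul, ← Matrix.mul_add, ← diagonal_add]
    rfl
  have hd : ∀ i, (lam i)⁻¹ + c ≠ 0 := fun i =>
    (add_pos (inv_pos.mpr (hlam i)) hc).ne'
  rw [hsum, hconj_inv _ hd, Matrix.trace_mul_cycle, hsU, Matrix.one_mul, Matrix.trace_diagonal]
  refine Finset.sum_congr rfl fun i _ => ?_
  simp [one_div]

/-- For a fusion frame `{W i}` for `ℝ^M` with bounds `0 < A ≤ B`,
noise level `σₙ > 0`, and a positive definite signal covariance `R` with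
eigenvalues `λ i` (with multiplicity), the MSE of the LMMSE estimator satisfies
`∑ᵢ 1/(1/λᵢ + B/σₙ²) ≤ tr[(R⁻¹ + σₙ⁻² ∑ⱼ Pⱼ)⁻¹] ≤ ∑ᵢ 1/(1/λᵢ + A/σₙ²)`. -/
theorem lmmse_mse_bounds {M N : ℕ} (A B : ℝ) (hA : 0 < A) (hAB : A ≤ B)
    (W : Fin N → Submodule ℝ (Fin M → ℝ))
    (P : Fin N → Matrix (Fin M) (Fin M) ℝ)
    (hP : ∀ i, (P i).IsSymm ∧ P i * P i = P i ∧
      LinearMap.range (P i).mulVecLin = W i)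
    (hframe : ((∑ i, P i) - A • (1 : Matrix (Fin M) (Fin M) ℝ)).PosSemidef ∧
      (B • (1 : Matrix (Fin M) (Fin M) ℝ) - ∑ i, P i).PosSemidef)
    (σn : ℝ) (hσn : 0 < σn)
    (R : Matrix (Fin M) (Fin M) ℝ) (hR : R.PosDef) :
    (∑ i, 1 / (1 / hR.1.eigenvalues i + B / σn ^ 2)) ≤
        Matrix.trace ((R⁻¹ + (σn ^ 2)⁻¹ • ∑ j, P j)⁻¹) ∧
      Matrix.trace ((R⁻¹ + (σn ^ 2)⁻¹ • ∑ j, P j)⁻¹) ≤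
        ∑ i, 1 / (1 / hR.1.eigenvalues i + A / σn ^ 2) := by
  obtain ⟨hlow, hupp⟩ := hframe
  have hB : 0 < B := lt_of_lt_of_le hA hAB
  have hσ2 : 0 < σn ^ 2 := by positivity
  have hσ2inv : (0:ℝ) ≤ (σn ^ 2)⁻¹ := (inv_pos.mpr hσ2).le
  set S : Matrix (Fin M) (Fin M) ℝ := R⁻¹ + (σn ^ 2)⁻¹ • ∑ j, P j with hSdef
  set X₁ : Matrix (Fin M) (Fin M) ℝ := R⁻¹ + (A / σn ^ 2) • 1 with hX₁def
  set X₂ : Matrix (Fin M) (Fin M) ℝ := R⁻¹ + (B / σn ^ 2) • 1 with hX₂def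
  have hone : (1 : Matrix (Fin M) (Fin M) ℝ).PosSemidef := by
    constructor
    · simp [Matrix.IsHermitian]
    · intro x
      exact Matrix.PosSemidef.one.2 x
  have hX₁pd : X₁.PosDef :=
    hR.inv.add_posSemidef (psd_smul (by positivity) hone)
  have hX₂pd : X₂.PosDef :=
    hR.inv.add_posSemidef (psd_smul (by positivity) hone)
  have hSX₁ : S - X₁ = (σn ^ 2)⁻¹ • ((∑ i, P i) - A • (1 : Matrix (Fin M) (Fin M) ℝ)) := by
    rw [hSdef, hX₁def, add_sub_add_left_eq_sub, smul_sub, smul_smul, inv_mul_eq_div]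
  have hX₂S : X₂ - S = (σn ^ 2)⁻¹ • (B • (1 : Matrix (Fin M) (Fin M) ℝ) - ∑ i, P i) := by
    rw [hSdef, hX₂def, add_sub_add_left_eq_sub, smul_sub, smul_smul, inv_mul_eq_div]
  have h₁ : (S - X₁).PosSemidef := hSX₁ ▸ psd_smul hσ2inv hlow
  have h₂ : (X₂ - S).PosSemidef := hX₂S ▸ psd_smul hσ2inv hupp
  have hSpd : S.PosDef := by
    have := hX₁pd.add_posSemidef h₁
    simpa using this
  have hupper : Matrix.trace S⁻¹ ≤ ∑ i, 1 / (1 / hR.1.eigenvalues i + A / σn ^ 2) := by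
    rw [← trace_inv_add_smul_one R hR (A / σn ^ 2) (by positivity)]
    exact trace_mono (inv_sub_inv_psd hX₁pd h₁)
  have hlower : (∑ i, 1 / (1 / hR.1.eigenvalues i + B / σn ^ 2)) ≤ Matrix.trace S⁻¹ := by
    rw [← trace_inv_add_smul_one R hR (B / σn ^ 2) (by positivity)]
    exact trace_mono (inv_sub_inv_psd hSpd h₂)
  exact ⟨hlower, hupper⟩
end

section
/- Let σ_x, σ_n > 0 and let W_1,…,W_N be subspaces of ℝ^M with orthogonal projections P_1,…,P_N that form a fusion frame (i.e. Σ_{i=1}^N P_i is positive definite), and set D = Σ_{i=1}^N dim W_i. Then tr[(σ_x^{-2} I + σ_n^{-2} Σ_{i=1}^N P_i)^{-1}] ≥ M σ_x² σ_n² / (σ_n² + σ_x² D/M), with equality if and only if the fusion frame is tight, i.e. Σ_{i=1}^N P_i = (D/M)·I. Hence, for signal covariance σ_x² I and fixed total subspace dimension, the MSE of the LMMSE estimator is minimized exactly by tight fusion frames. -/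
open Matrix BigOperators

/-- trace of an idempotent matrix equals the dimension of its range. -/
lemma trace_of_proj {m : ℕ} (P : Matrix (Fin m) (Fin m) ℝ) (h : P * P = P)
    (Wi : Submodule ℝ (Fin m → ℝ)) (hr : LinearMap.range P.mulVecLin = Wi) :
    P.trace = (Module.finrank ℝ Wi : ℝ) := by
  have hproj : LinearMap.IsProj Wi P.mulVecLin := by
    constructor
    · intro x
      rw [← hr]
      exact LinearMap.mem_range_self _ x
    · intro x hx
      rw [← hr] at hx
      obtain ⟨y, rfl⟩ := hx
      simp only [Matrix.mulVecLin_apply, Matrix.mulVec_mulVec, h]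
  have h1 := hproj.trace
  have h2 : LinearMap.trace ℝ (Fin m → ℝ) P.mulVecLin = P.trace := by
    rw [LinearMap.trace_eq_matrix_trace ℝ (Pi.basisFun ℝ (Fin m)),
      LinearMap.toMatrix_eq_toMatrix']
    congr 1
    rw [← Matrix.toLin'_apply' P, LinearMap.toMatrix'_toLin']
  rw [← h2, h1]

/-- smul of a PosDef matrix by a positive real is PosDef. -/
lemma posDef_smul {m : ℕ} {A : Matrix (Fin m) (Fin m) ℝ} (hA : A.PosDef)
    {c : ℝ} (hc : 0 < c) : (c • A).PosDef := by
  refine ⟨?_, fun x hx => ?_⟩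
  · unfold Matrix.IsHermitian
    rw [Matrix.conjTranspose_smul, hA.1.eq]
    simp
  · exact (hA.smul hc).2 hx

/-- Key spectral inequality: for a positive definite real matrix `A` of size `m`,
`tr A⁻¹ ≥ m² / tr A` with equality iff `A = (tr A / m) • 1`. -/
lemma trace_inv_key {m : ℕ} (hm : 0 < m) (A : Matrix (Fin m) (Fin m) ℝ)
    (hA : A.PosDef) :
    (m : ℝ) ^ 2 / A.trace ≤ A⁻¹.trace ∧
      (A⁻¹.trace = (m : ℝ) ^ 2 / A.trace ↔ A = (A.trace / m) • 1) := by
  classical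
  have hH := hA.isHermitian
  set U : Matrix (Fin m) (Fin m) ℝ := (hH.eigenvectorUnitary : Matrix (Fin m) (Fin m) ℝ)
    with hU
  set lam : Fin m → ℝ := hH.eigenvalues with hlam
  have hUU : U * star U = 1 := (Matrix.mem_unitaryGroup_iff).mp hH.eigenvectorUnitary.2
  have hUU' : star U * U = 1 := (Matrix.mem_unitaryGroup_iff').mp hH.eigenvectorUnitary.2
  have hspec : A = U * Matrix.diagonal lam * star U := by
    have := hH.spectral_theorem
    simpa [RCLike.ofReal_real_eq_id] using this
  have hpos : ∀ i, 0 < lam i := fun i => hA.eigenvalues_pos i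
  have htrA : A.trace = ∑ i, lam i := by
    rw [hspec, Matrix.trace_mul_cycle, hUU', Matrix.one_mul, Matrix.trace_diagonal]
  have hdd : Matrix.diagonal lam * Matrix.diagonal (fun i => (lam i)⁻¹) = 1 := by
    rw [Matrix.diagonal_mul_diagonal]
    have hfun : (fun i => lam i * (lam i)⁻¹) = fun _ => (1:ℝ) :=
      funext fun i => mul_inv_cancel₀ (hpos i).ne'
    rw [hfun, Matrix.diagonal_one]
  have hinv : A⁻¹ = U * Matrix.diagonal (fun i => (lam i)⁻¹) * star U := by
    apply Matrix.inv_eq_right_inv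
    rw [hspec]
    calc U * Matrix.diagonal lam * star U * (U * Matrix.diagonal (fun i => (lam i)⁻¹) * star U)
        = U * (Matrix.diagonal lam * ((star U * U) *
            Matrix.diagonal (fun i => (lam i)⁻¹))) * star U := by
          simp only [Matrix.mul_assoc]
      _ = 1 := by rw [hUU', Matrix.one_mul, hdd, Matrix.mul_one, hUU]
  have htrAi : A⁻¹.trace = ∑ i, (lam i)⁻¹ := by
    rw [hinv, Matrix.trace_mul_cycle, hUU', Matrix.one_mul, Matrix.trace_diagonal]
  have htpos : 0 < A.trace := by
    rw [htrA]
    exact Finset.sum_pos (fun i _ => hpos i) ⟨⟨0, hm⟩, Finset.mem_univ _⟩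
  set c : ℝ := A.trace / m with hc
  have hmR : (0:ℝ) < m := Nat.cast_pos.mpr hm
  have hcpos : 0 < c := div_pos htpos hmR
  have hterm : ∀ i, (lam i)⁻¹ - (2 * c - lam i) / c ^ 2 = (lam i - c) ^ 2 / (c ^ 2 * lam i) := by
    intro i
    have h1 := (hpos i).ne'
    have h2 := hcpos.ne'
    field_simp
    ring
  have hterm_nonneg : ∀ i, 0 ≤ (lam i)⁻¹ - (2 * c - lam i) / c ^ 2 := by
    intro i
    rw [hterm i]
    have := hpos i
    positivity
  have hsum : ∑ i, (2 * c - lam i) / c ^ 2 = (m : ℝ) ^ 2 / A.trace := by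
    rw [← Finset.sum_div]
    have h1 : ∑ i : Fin m, (2 * c - lam i) = 2 * c * m - A.trace := by
      rw [Finset.sum_sub_distrib, Finset.sum_const, Finset.card_univ, Fintype.card_fin,
        ← htrA]
      push_cast
      ring
    rw [h1, hc]
    field_simp
    ring
  have hineq : (m : ℝ) ^ 2 / A.trace ≤ A⁻¹.trace := by
    rw [htrAi, ← hsum]
    apply Finset.sum_le_sum
    intro i _
    linarith [hterm_nonneg i]
  refine ⟨hineq, ?_, ?_⟩
  · intro heq
    have hzero : ∑ i, ((lam i)⁻¹ - (2 * c - lam i) / c ^ 2) = 0 := by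
      rw [Finset.sum_sub_distrib, hsum, ← htrAi, heq]
      ring
    have hall : ∀ i ∈ Finset.univ, (lam i)⁻¹ - (2 * c - lam i) / c ^ 2 = 0 :=
      (Finset.sum_eq_zero_iff_of_nonneg (fun i _ => hterm_nonneg i)).mp hzero
    have hlamc : ∀ i, lam i = c := by
      intro i
      have h0 := hall i (Finset.mem_univ i)
      rw [hterm i] at h0
      have hd : c ^ 2 * lam i ≠ 0 := by
        have := hpos i
        positivity
      rw [div_eq_zero_iff] at h0
      rcases h0 with h0 | h0
      · have h3 := pow_eq_zero_iff (n := 2) (by norm_num) |>.mp h0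
        linarith
      · exact absurd h0 hd
    have hdiag : Matrix.diagonal lam = c • (1 : Matrix (Fin m) (Fin m) ℝ) := by
      ext i j
      rcases eq_or_ne i j with rfl | hij
      · simp [hlamc i]
      · simp [Matrix.diagonal_apply_ne _ hij, Matrix.one_apply_ne hij]
    rw [hspec, hdiag, Matrix.mul_smul, Matrix.mul_one, Matrix.smul_mul, hUU]
  · intro heq
    have hlamc : ∀ i, lam i = c := by
      intro i
      have h2 : Matrix.diagonal lam = c • (1 : Matrix (Fin m) (Fin m) ℝ) := by
        have h3 := hH.conjStarAlgAut_star_eigenvectorUnitary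
        have h4 : Matrix.diagonal lam = star U * A * U := by
          rw [hlam]
          simpa [RCLike.ofReal_real_eq_id] using h3.symm
        rw [heq] at h4
        rw [h4, Matrix.mul_smul, Matrix.smul_mul, Matrix.mul_one, hUU']
      have h4 := congrArg (fun X => X i i) h2
      simpa using h4
    rw [htrAi]
    have hsc : ∀ i ∈ Finset.univ, (lam i)⁻¹ = c⁻¹ := fun i _ => by rw [hlamc i]
    rw [Finset.sum_congr rfl hsc, Finset.sum_const, Finset.card_univ, Fintype.card_fin, hc]
    field_simp
    rw [nsmul_eq_mul, mul_div_assoc', mul_div_assoc', mul_div_cancel_left₀ _ htpos.ne']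
    ring

/-- Let `σₓ, σₙ > 0` and let `W 1, …, W N` be subspaces of `ℝ^M` with
orthogonal projections `P 1, …, P N` forming a fusion frame (`∑ᵢ Pᵢ` positive definite),
and set `D = ∑ᵢ dim W i`.  Then
`tr[(σₓ⁻² I + σₙ⁻² ∑ᵢ Pᵢ)⁻¹] ≥ M σₓ² σₙ² / (σₙ² + σₓ² D/M)`,
with equality if and only if the fusion frame is tight, i.e. `∑ᵢ Pᵢ = (D/M) • I`. -/
theorem lmmse_mse_min_iff_tight {M N : ℕ} (hM : 0 < M)
    (σx σn : ℝ) (hσx : 0 < σx) (hσn : 0 < σn)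
    (W : Fin N → Submodule ℝ (Fin M → ℝ))
    (P : Fin N → Matrix (Fin M) (Fin M) ℝ)
    (hP : ∀ i, (P i).IsSymm ∧ P i * P i = P i ∧
      LinearMap.range (P i).mulVecLin = W i)
    (hff : (∑ i, P i).PosDef)
    (D : ℕ) (hD : D = ∑ i, Module.finrank ℝ (W i)) :
    (M : ℝ) * σx ^ 2 * σn ^ 2 / (σn ^ 2 + σx ^ 2 * D / M) ≤
        Matrix.trace (((σx ^ 2)⁻¹ • (1 : Matrix (Fin M) (Fin M) ℝ) +
          (σn ^ 2)⁻¹ • ∑ i, P i)⁻¹) ∧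
      (Matrix.trace (((σx ^ 2)⁻¹ • (1 : Matrix (Fin M) (Fin M) ℝ) +
          (σn ^ 2)⁻¹ • ∑ i, P i)⁻¹) =
          (M : ℝ) * σx ^ 2 * σn ^ 2 / (σn ^ 2 + σx ^ 2 * D / M) ↔
        ∑ i, P i = ((D : ℝ) / (M : ℝ)) • (1 : Matrix (Fin M) (Fin M) ℝ)) := by
  classical
  set S : Matrix (Fin M) (Fin M) ℝ := ∑ i, P i with hS
  set A : Matrix (Fin M) (Fin M) ℝ := (σx ^ 2)⁻¹ • 1 + (σn ^ 2)⁻¹ • S with hAdef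
  have hmR : (0:ℝ) < M := Nat.cast_pos.mpr hM
  have hx2 : (0:ℝ) < σx ^ 2 := by positivity
  have hn2 : (0:ℝ) < σn ^ 2 := by positivity
  have hApos : A.PosDef :=
    (posDef_smul Matrix.PosDef.one (inv_pos.mpr hx2)).add (posDef_smul hff (inv_pos.mpr hn2))
  have htrS : S.trace = (D : ℝ) := by
    rw [hS, Matrix.trace_sum, hD]
    push_cast
    exact Finset.sum_congr rfl fun i _ => trace_of_proj (P i) (hP i).2.1 (W i) (hP i).2.2
  have htrA : A.trace = (M : ℝ) * (σx ^ 2)⁻¹ + (σn ^ 2)⁻¹ * D := by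
    rw [hAdef, Matrix.trace_add, Matrix.trace_smul, Matrix.trace_smul, Matrix.trace_one,
      htrS, Fintype.card_fin]
    simp [mul_comm]
  have htrApos : 0 < A.trace := by
    rw [htrA]; positivity
  have hrhs : (M : ℝ) * σx ^ 2 * σn ^ 2 / (σn ^ 2 + σx ^ 2 * D / M) = (M : ℝ) ^ 2 / A.trace := by
    rw [div_eq_div_iff (by positivity) htrApos.ne', htrA]
    field_simp
  obtain ⟨hle, hiff⟩ := trace_inv_key hM A hApos
  constructor
  · rw [hrhs]; exact hle
  · rw [hrhs, hiff]
    have hcval : A.trace / M = (σx ^ 2)⁻¹ + (σn ^ 2)⁻¹ * ((D : ℝ) / M) := by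
      rw [htrA]
      field_simp
    constructor
    · intro h
      rw [hcval] at h
      have h3 : (σx ^ 2)⁻¹ • (1 : Matrix (Fin M) (Fin M) ℝ) + (σn ^ 2)⁻¹ • S =
          (σx ^ 2)⁻¹ • 1 + ((σn ^ 2)⁻¹ * ((D : ℝ) / M)) • 1 := by
        rw [← hAdef, h, add_smul]
      have h2 : (σn ^ 2)⁻¹ • S = ((σn ^ 2)⁻¹ * ((D : ℝ) / M)) • (1 : Matrix (Fin M) (Fin M) ℝ) :=
        add_left_cancel h3
      have h4 := congrArg (fun X : Matrix (Fin M) (Fin M) ℝ => (σn ^ 2) • X) h2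
      simp only [smul_smul] at h4
      rw [mul_inv_cancel₀ hn2.ne', one_smul, ← mul_assoc, mul_inv_cancel₀ hn2.ne', one_mul] at h4
      exact h4
    · intro h
      rw [hAdef, hcval, h, smul_smul, ← add_smul]
end

section
/- Let {W_i}_{i=1}^N be a tight fusion frame for ℝ^M with Σ_{i=1}^N P_i = A·I, let σ_x, σ_n > 0, let P be the NM×M composite matrix stacking P_1,…,P_N, let S ⊆ {1,…,N}, and let E be the NM×NM block-diagonal matrix whose i-th M×M diagonal block is I if i ∈ S and 0 otherwise. Then tr[σ_x⁴ P^T (σ_x² P P^T + σ_n² I)^{-1} E (σ_x² P P^T + σ_n² I) E (σ_x² P P^T + σ_n² I)^{-1} P] = α² · tr[σ_x² (Σ_{i∈S} P_i)² + σ_n² Σ_{i∈S} P_i], where α = σ_x²/(A σ_x² + σ_n²). -/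
open Matrix BigOperators

/-- For a tight fusion frame (`∑ᵢ Pᵢ = A • I`), `σₓ, σₙ > 0`,
composite stacked matrix `Pc`, an erasure set `S ⊆ {1,…,N}` and the corresponding
block-diagonal erasure matrix `E`, the extra MSE satisfies
`tr[σₓ⁴ Pcᵀ (σₓ² Pc Pcᵀ + σₙ² I)⁻¹ E (σₓ² Pc Pcᵀ + σₙ² I) E (σₓ² Pc Pcᵀ + σₙ² I)⁻¹ Pc]
  = α² tr[σₓ² (∑_{i∈S} Pᵢ)² + σₙ² ∑_{i∈S} Pᵢ]`, where `α = σₓ²/(A σₓ² + σₙ²)`. -/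
theorem erasure_extra_mse {M N : ℕ} (A : ℝ) (hA : 0 < A)
    (σx σn : ℝ) (hσx : 0 < σx) (hσn : 0 < σn)
    (P : Fin N → Matrix (Fin M) (Fin M) ℝ)
    (hP : ∀ i, (P i).IsSymm ∧ P i * P i = P i)
    (htight : ∑ i, P i = A • (1 : Matrix (Fin M) (Fin M) ℝ))
    (Pc : Matrix (Fin N × Fin M) (Fin M) ℝ)
    (hPc : ∀ (i : Fin N) (k j : Fin M), Pc (i, k) j = P i k j)
    (S : Finset (Fin N))
    (E : Matrix (Fin N × Fin M) (Fin N × Fin M) ℝ)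
    (hE : ∀ p q : Fin N × Fin M,
      E p q = if p.1 = q.1 ∧ p.2 = q.2 ∧ p.1 ∈ S then 1 else 0)
    (α : ℝ) (hα : α = σx ^ 2 / (A * σx ^ 2 + σn ^ 2)) :
    σx ^ 4 * Matrix.trace (Pcᵀ *
        (σx ^ 2 • (Pc * Pcᵀ) + σn ^ 2 • (1 : Matrix (Fin N × Fin M) (Fin N × Fin M) ℝ))⁻¹ *
        E *
        (σx ^ 2 • (Pc * Pcᵀ) + σn ^ 2 • (1 : Matrix (Fin N × Fin M) (Fin N × Fin M) ℝ)) *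
        E *
        (σx ^ 2 • (Pc * Pcᵀ) + σn ^ 2 • (1 : Matrix (Fin N × Fin M) (Fin N × Fin M) ℝ))⁻¹ *
        Pc) =
      α ^ 2 * Matrix.trace
        (σx ^ 2 • ((∑ i ∈ S, P i) * (∑ i ∈ S, P i)) + σn ^ 2 • ∑ i ∈ S, P i) := by
  have hc : 0 < A * σx ^ 2 + σn ^ 2 := by positivity
  set Q : Matrix (Fin N × Fin M) (Fin N × Fin M) ℝ := Pc * Pcᵀ with hQdef
  set G : Matrix (Fin N × Fin M) (Fin N × Fin M) ℝ :=
    σx ^ 2 • Q + σn ^ 2 • 1 with hGdef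
  -- pointwise inner product identity
  have hPP : ∀ (i : Fin N) (j k : Fin M), ∑ m, P i m j * P i m k = (P i) j k := by
    intro i j k
    have hs := (hP i).1
    conv_rhs => rw [← (hP i).2, mul_apply]
    refine Finset.sum_congr rfl fun m _ => ?_
    rw [hs.apply j m]
  -- Pcᵀ * Pc = A • 1
  have h1 : Pcᵀ * Pc = A • (1 : Matrix (Fin M) (Fin M) ℝ) := by
    ext j k
    rw [mul_apply, Fintype.sum_prod_type, ← htight, Matrix.sum_apply]
    refine Finset.sum_congr rfl fun i _ => ?_
    simp only [transpose_apply, hPc]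
    exact hPP i j k
  have hQPc : Q * Pc = A • Pc := by
    rw [hQdef, Matrix.mul_assoc, h1, Matrix.mul_smul, Matrix.mul_one]
  have hPcQ : Pcᵀ * Q = A • Pcᵀ := by
    rw [hQdef, ← Matrix.mul_assoc, h1, Matrix.smul_mul, Matrix.one_mul]
  have hQQ : Q * Q = A • Q := by
    rw [hQdef, Matrix.mul_assoc, ← Matrix.mul_assoc Pcᵀ, h1,
      Matrix.smul_mul, Matrix.one_mul, Matrix.mul_smul]
  -- inverse of G
  have hGright : G * ((σn ^ 2)⁻¹ • ((1 : Matrix (Fin N × Fin M) (Fin N × Fin M) ℝ) - α • Q)) = 1 := by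
    have hGQ : G * Q = (σx ^ 2 * A + σn ^ 2) • Q := by
      rw [hGdef, Matrix.add_mul, Matrix.smul_mul, Matrix.smul_mul, hQQ,
        Matrix.one_mul, smul_smul, add_smul]
    rw [Matrix.mul_smul, mul_sub, mul_one, Matrix.mul_smul, hGQ]
    have hαc : α * (σx ^ 2 * A + σn ^ 2) = σx ^ 2 := by
      rw [hα]; field_simp
    rw [smul_smul, hαc, hGdef]
    have : σx ^ 2 • Q + σn ^ 2 • (1 : Matrix (Fin N × Fin M) (Fin N × Fin M) ℝ)
        - σx ^ 2 • Q = σn ^ 2 • 1 := by abel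
    rw [this, smul_smul, inv_mul_cancel₀ (by positivity), one_smul]
  have hGinv : G⁻¹ = (σn ^ 2)⁻¹ • ((1 : Matrix (Fin N × Fin M) (Fin N × Fin M) ℝ) - α • Q) :=
    Matrix.inv_eq_right_inv hGright
  have hcoef : (σn ^ 2)⁻¹ * (1 - α * A) = α / σx ^ 2 := by
    rw [hα]; field_simp; ring
  have hGiPc : G⁻¹ * Pc = (α / σx ^ 2) • Pc := by
    rw [hGinv, Matrix.smul_mul, Matrix.sub_mul, Matrix.one_mul, Matrix.smul_mul, hQPc,
      smul_smul]
    rw [show Pc - (α * A) • Pc = (1 - α * A) • Pc by rw [sub_smul, one_smul],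
      smul_smul, hcoef]
  have hPcGi : Pcᵀ * G⁻¹ = (α / σx ^ 2) • Pcᵀ := by
    rw [hGinv, Matrix.mul_smul, Matrix.mul_sub, Matrix.mul_one, Matrix.mul_smul, hPcQ, smul_smul]
    rw [show Pcᵀ - (α * A) • Pcᵀ = (1 - α * A) • Pcᵀ by rw [sub_smul, one_smul],
      smul_smul, hcoef]
  -- E is a projection
  have hEE : E * E = E := by
    ext p q
    rw [mul_apply]
    rw [Finset.sum_eq_single p]
    · rw [hE, hE]
      by_cases h2 : p.1 ∈ S <;> simp [h2]
    · intro b _ hb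
      rw [hE]
      have : ¬(p.1 = b.1 ∧ p.2 = b.2 ∧ p.1 ∈ S) := by
        rintro ⟨h1', h2', _⟩; exact hb (Prod.ext h1' h2').symm
      simp [this]
    · intro h; exact absurd (Finset.mem_univ p) h
  have hEPc : ∀ (p : Fin N × Fin M) (j : Fin M),
      (E * Pc) p j = if p.1 ∈ S then Pc p j else 0 := by
    intro p j
    rw [mul_apply, Finset.sum_eq_single p]
    · rw [hE]
      by_cases h : p.1 ∈ S <;> simp [h]
    · intro b _ hb
      rw [hE]
      have : ¬(p.1 = b.1 ∧ p.2 = b.2 ∧ p.1 ∈ S) := by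
        rintro ⟨h1', h2', _⟩; exact hb (Prod.ext h1' h2').symm
      simp [this]
    · intro h; exact absurd (Finset.mem_univ p) h
  have hPEP : Pcᵀ * E * Pc = ∑ i ∈ S, P i := by
    rw [Matrix.mul_assoc]
    ext j k
    rw [mul_apply, Fintype.sum_prod_type]
    rw [Matrix.sum_apply]
    rw [show (∑ i ∈ S, (P i) j k) = ∑ i, if i ∈ S then (P i) j k else 0 by
      rw [Finset.sum_ite_mem, Finset.univ_inter]]
    refine Finset.sum_congr rfl fun i _ => ?_
    by_cases h : i ∈ S
    · simp only [transpose_apply, hEPc, h, if_true, hPc]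
      exact hPP i j k
    · simp [hEPc, h]
  -- middle computation
  have e1 : Pcᵀ * E * Q * E * Pc = (Pcᵀ * E * Pc) * (Pcᵀ * E * Pc) := by
    rw [hQdef]; simp only [Matrix.mul_assoc]
  have e2 : Pcᵀ * E * E * Pc = Pcᵀ * E * Pc := by
    rw [Matrix.mul_assoc Pcᵀ E E, hEE]
  have hmid : Pcᵀ * E * G * E * Pc
      = σx ^ 2 • ((∑ i ∈ S, P i) * (∑ i ∈ S, P i)) + σn ^ 2 • ∑ i ∈ S, P i := by
    rw [hGdef]
    simp only [Matrix.mul_add, Matrix.add_mul, Matrix.mul_smul, Matrix.smul_mul,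
      Matrix.mul_one]
    rw [e1, e2, hPEP]
  -- assemble
  rw [show Pcᵀ * G⁻¹ * E * G * E * G⁻¹ * Pc
      = Pcᵀ * G⁻¹ * E * G * E * (G⁻¹ * Pc) from Matrix.mul_assoc _ _ _]
  rw [hGiPc, hPcGi]
  simp only [Matrix.smul_mul, Matrix.mul_smul, smul_smul]
  rw [hmid, Matrix.trace_smul]
  have hx : σx ≠ 0 := ne_of_gt hσx
  rw [smul_eq_mul]
  field_simp
end

section
/- Let {W_i}_{i=1}^N be a tight fusion frame for ℝ^M with Σ_{ℓ=1}^N P_ℓ = A·I, A = (1/M) Σ_{ℓ=1}^N m_ℓ, m_ℓ = dim W_ℓ, and let σ_x, σ_n > 0. If only the i-th subspace is erased, the total MSE of the no-erasure LMMSE estimator equals M σ_x² σ_n² / (σ_n² + σ_x² A) + σ_x⁴ (σ_x² + σ_n²) m_i / (σ_n² + σ_x² A)². Equivalently, the extra MSE due to erasure of W_i is α² (σ_x² + σ_n²) m_i with α = σ_x²/(A σ_x² + σ_n²); in particular it is proportional to the dimension m_i of the erased subspace. -/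
open Matrix BigOperators

lemma trace_proj {M : ℕ} (P : Matrix (Fin M) (Fin M) ℝ) (h : P * P = P) :
    Matrix.trace P = (Module.finrank ℝ (LinearMap.range P.mulVecLin) : ℝ) := by
  have hproj : LinearMap.IsProj (LinearMap.range P.mulVecLin) P.mulVecLin := by
    constructor
    · intro x; exact ⟨x, rfl⟩
    · rintro x ⟨y, rfl⟩
      have := congrArg (fun Q => Q.mulVec y) h
      simpa [Matrix.mulVecLin, Matrix.mulVec_mulVec] using this
  have h2 := LinearMap.IsProj.trace hproj
  rwa [LinearMap.trace_eq_matrix_trace ℝ (Pi.basisFun ℝ (Fin M)),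
    LinearMap.toMatrix_eq_toMatrix', ← Matrix.toLin'_apply' P,
    LinearMap.toMatrix'_toLin'] at h2

/-- For a tight fusion frame `∑ₗ Pₗ = A • I` with
`A = (1/M) ∑ₗ mₗ`, `mₗ = dim W ℓ`, and `σₓ, σₙ > 0`: if only the `i`-th subspace is
erased, the total MSE of the no-erasure LMMSE estimator equals
`M σₓ² σₙ²/(σₙ² + σₓ² A) + σₓ⁴ (σₓ² + σₙ²) mᵢ/(σₙ² + σₓ² A)²`.  Equivalently,
the extra MSE due to the erasure of `W i` equals `α² (σₓ² + σₙ²) mᵢ` with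
`α = σₓ²/(A σₓ² + σₙ²)`, proportional to the dimension `mᵢ` of the erased subspace. -/
theorem one_erasure_mse {M N : ℕ} (hM : 0 < M) (A : ℝ) (hA : 0 < A)
    (σx σn : ℝ) (hσx : 0 < σx) (hσn : 0 < σn)
    (W : Fin N → Submodule ℝ (Fin M → ℝ))
    (P : Fin N → Matrix (Fin M) (Fin M) ℝ)
    (hP : ∀ i, (P i).IsSymm ∧ P i * P i = P i ∧
      LinearMap.range (P i).mulVecLin = W i)
    (htight : ∑ ℓ, P ℓ = A • (1 : Matrix (Fin M) (Fin M) ℝ))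
    (hAval : A = (1 / (M : ℝ)) * ∑ ℓ, (Module.finrank ℝ (W ℓ) : ℝ))
    (i : Fin N)
    (α : ℝ) (hα : α = σx ^ 2 / (A * σx ^ 2 + σn ^ 2)) :
    Matrix.trace (((σx ^ 2)⁻¹ • (1 : Matrix (Fin M) (Fin M) ℝ) +
          (σn ^ 2)⁻¹ • ∑ ℓ, P ℓ)⁻¹) +
        α ^ 2 * Matrix.trace (σx ^ 2 • (P i * P i) + σn ^ 2 • P i) =
      (M : ℝ) * σx ^ 2 * σn ^ 2 / (σn ^ 2 + σx ^ 2 * A) +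
        σx ^ 4 * (σx ^ 2 + σn ^ 2) * (Module.finrank ℝ (W i) : ℝ) /
          (σn ^ 2 + σx ^ 2 * A) ^ 2 ∧
    α ^ 2 * Matrix.trace (σx ^ 2 • (P i * P i) + σn ^ 2 • P i) =
      α ^ 2 * (σx ^ 2 + σn ^ 2) * (Module.finrank ℝ (W i) : ℝ) := by
  obtain ⟨hsymm, hidem, hrange⟩ := hP i
  have hx2 : (0:ℝ) < σx ^ 2 := by positivity
  have hn2 : (0:ℝ) < σn ^ 2 := by positivity
  set c : ℝ := (σx ^ 2)⁻¹ + A * (σn ^ 2)⁻¹ with hc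
  have hcpos : 0 < c := by positivity
  have hmat : (σx ^ 2)⁻¹ • (1 : Matrix (Fin M) (Fin M) ℝ) +
      (σn ^ 2)⁻¹ • ∑ ℓ, P ℓ = c • 1 := by
    rw [htight, smul_smul, hc, add_smul]; ring_nf
  have hinv : ((σx ^ 2)⁻¹ • (1 : Matrix (Fin M) (Fin M) ℝ) +
      (σn ^ 2)⁻¹ • ∑ ℓ, P ℓ)⁻¹ = c⁻¹ • 1 := by
    rw [hmat]
    apply Matrix.inv_eq_left_inv
    rw [smul_mul_smul_comm, one_mul, inv_mul_cancel₀ hcpos.ne', one_smul]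
  have htr : Matrix.trace (P i) = (Module.finrank ℝ (W i) : ℝ) := by
    rw [trace_proj (P i) hidem, hrange]
  have hextra : α ^ 2 * Matrix.trace (σx ^ 2 • (P i * P i) + σn ^ 2 • P i) =
      α ^ 2 * (σx ^ 2 + σn ^ 2) * (Module.finrank ℝ (W i) : ℝ) := by
    rw [hidem, Matrix.trace_add, Matrix.trace_smul, Matrix.trace_smul, htr]
    simp only [smul_eq_mul]; ring
  refine ⟨?_, hextra⟩
  rw [hextra, hinv, Matrix.trace_smul, Matrix.trace_one, hα]
  simp only [smul_eq_mul, Finset.card_univ, Fintype.card_fin]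
  have hden : (0:ℝ) < σn ^ 2 + σx ^ 2 * A := by positivity
  have hden2 : A * σx ^ 2 + σn ^ 2 ≠ 0 := by positivity
  have hc' : c⁻¹ = σx ^ 2 * σn ^ 2 / (σn ^ 2 + σx ^ 2 * A) := by
    rw [hc]; field_simp
  rw [hc']
  field_simp
  ring
end

section
/- Fix integers M, N ≥ 1 and σ_x, σ_n > 0, and define MSE : (0,∞) → ℝ by MSE(m) = M σ_x² σ_n² / (N m σ_x²/M + σ_n²) + σ_x⁴ (σ_x² + σ_n²) m / (N m σ_x²/M + σ_n²)². Then there exists m̃ ≥ 0 such that MSE is monotonically increasing on (0, m̃] and monotonically decreasing on [m̃, ∞). Consequently, for any 0 < m_min ≤ m_max, the minimum of MSE over the interval [m_min, m_max] is attained at an endpoint: at m_min if MSE(m_min) ≤ MSE(m_max), and at m_max otherwise. -/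
open BigOperators

lemma aux_mono (P Q u v : ℝ) (hP : 0 < P) (hQ : 0 < Q) (hu : 0 < u)
    (huv : u ≤ v) (hv : v ≤ 2*Q/P) : P/u - Q/u^2 ≤ P/v - Q/v^2 := by
  have hv0 : 0 < v := lt_of_lt_of_le hu huv
  have hPv : v*P ≤ 2*Q := (le_div_iff₀ hP).mp hv
  have hPu : u*P ≤ 2*Q := (le_div_iff₀ hP).mp (le_trans huv hv)
  have h1 : P/u - Q/u^2 = (P*u - Q)/u^2 := by
    field_simp
  have h2 : P/v - Q/v^2 = (P*v - Q)/v^2 := by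
    field_simp
  rw [h1, h2, div_le_div_iff₀ (by positivity) (by positivity)]
  nlinarith [mul_nonneg (sub_nonneg.2 huv) (mul_nonneg hu.le (sub_nonneg.2 hPv)),
    mul_nonneg (sub_nonneg.2 huv) (mul_nonneg hv0.le (sub_nonneg.2 hPu))]

lemma aux_anti (P Q u v : ℝ) (hP : 0 < P) (hQ : 0 < Q) (hu : 2*Q/P ≤ u)
    (huv : u ≤ v) : P/v - Q/v^2 ≤ P/u - Q/u^2 := by
  have hu0 : 0 < u := lt_of_lt_of_le (by positivity) hu
  have hv0 : 0 < v := lt_of_lt_of_le hu0 huv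
  have hPu : 2*Q ≤ u*P := (div_le_iff₀ hP).mp hu
  have hPv : 2*Q ≤ v*P := (div_le_iff₀ hP).mp (le_trans hu huv)
  have h1 : P/u - Q/u^2 = (P*u - Q)/u^2 := by
    field_simp
  have h2 : P/v - Q/v^2 = (P*v - Q)/v^2 := by
    field_simp
  rw [h1, h2, div_le_div_iff₀ (by positivity) (by positivity)]
  nlinarith [mul_nonneg (sub_nonneg.2 huv) (mul_nonneg hu0.le (sub_nonneg.2 hPv)),
    mul_nonneg (sub_nonneg.2 huv) (mul_nonneg hv0.le (sub_nonneg.2 hPu))]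

lemma generic_unimodal (A B c s : ℝ) (hA : 0 < A) (hB : 0 < B) (hc : 0 < c)
    (hs : 0 < s) (f : ℝ → ℝ)
    (hf : ∀ m : ℝ, f m = A/(c*m+s) + B*m/(c*m+s)^2) :
    (∃ mt : ℝ, 0 ≤ mt ∧ MonotoneOn f (Set.Ioc 0 mt) ∧ AntitoneOn f (Set.Ici mt)) ∧
    ∀ mmin mmax : ℝ, 0 < mmin → mmin ≤ mmax →
      ((f mmin ≤ f mmax → ∀ m ∈ Set.Icc mmin mmax, f mmin ≤ f m) ∧
        (f mmax < f mmin → ∀ m ∈ Set.Icc mmin mmax, f mmax ≤ f m)) := by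
  set P : ℝ := A + B/c with hP
  set Q : ℝ := B*s/c with hQ
  have hP0 : 0 < P := add_pos hA (div_pos hB hc)
  have hQ0 : 0 < Q := div_pos (mul_pos hB hs) hc
  have key : ∀ m : ℝ, 0 ≤ m → f m = P/(c*m+s) - Q/(c*m+s)^2 := by
    intro m hm
    have hu : (0:ℝ) < c*m+s := add_pos_of_nonneg_of_pos (mul_nonneg hc.le hm) hs
    rw [hf m, hP, hQ]
    field_simp
    ring
  set mt : ℝ := max 0 ((2*Q/P - s)/c) with hmt
  have hmt0 : 0 ≤ mt := le_max_left _ _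
  have hub : ∀ x : ℝ, mt ≤ x → 2*Q/P ≤ c*x + s := by
    intro x hx
    have h1 : (2*Q/P - s)/c ≤ x := le_trans (le_max_right _ _) hx
    have h2 := (div_le_iff₀ hc).mp h1
    linarith
  have hlb : ∀ x : ℝ, 0 < x → x ≤ mt → c*x + s ≤ 2*Q/P := by
    intro x hx hxm
    rcases le_total ((2*Q/P - s)/c) 0 with h | h
    · have hz : mt = 0 := max_eq_left h
      rw [hz] at hxm
      linarith
    · have hz : mt = (2*Q/P - s)/c := max_eq_right h
      rw [hz] at hxm
      have h2 := (le_div_iff₀ hc).mp hxm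
      linarith
  have hmono : MonotoneOn f (Set.Ioc 0 mt) := by
    intro x hx y hy hxy
    have hy0 : 0 < y := lt_of_lt_of_le hx.1 hxy
    rw [key x hx.1.le, key y hy0.le]
    exact aux_mono P Q _ _ hP0 hQ0
      (add_pos_of_nonneg_of_pos (mul_nonneg hc.le hx.1.le) hs)
      (add_le_add_left (mul_le_mul_of_nonneg_left hxy hc.le) s)
      (hlb y hy0 hy.2)
  have hanti : AntitoneOn f (Set.Ici mt) := by
    intro x hx y hy hxy
    rw [key x (le_trans hmt0 hx), key y (le_trans hmt0 hy)]
    exact aux_anti P Q _ _ hP0 hQ0 (hub x hx)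
      (add_le_add_left (mul_le_mul_of_nonneg_left hxy hc.le) s)
  refine ⟨⟨mt, hmt0, hmono, hanti⟩, ?_⟩
  intro mmin mmax hmin hle
  have hmain : ∀ m ∈ Set.Icc mmin mmax, f mmin ≤ f m ∨ f mmax ≤ f m := by
    intro m hm
    rcases le_total m mt with h | h
    · left
      exact hmono ⟨hmin, le_trans hm.1 h⟩ ⟨lt_of_lt_of_le hmin hm.1, h⟩ hm.1
    · right
      exact hanti h (le_trans h hm.2) hm.2
  exact ⟨fun hle' m hm => (hmain m hm).elim id (fun h => le_trans hle' h),
    fun hlt m hm => (hmain m hm).elim (fun h => le_trans hlt.le h) id⟩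

/-- Fix integers `M, N ≥ 1` and `σₓ, σₙ > 0`, and consider
`MSE(m) = M σₓ² σₙ² / (N m σₓ²/M + σₙ²) + σₓ⁴ (σₓ² + σₙ²) m / (N m σₓ²/M + σₙ²)²`
for `m > 0`.  Then there is `m̃ ≥ 0` such that `MSE` is monotonically increasing on
`(0, m̃]` and monotonically decreasing on `[m̃, ∞)`.  Consequently, for any
`0 < m_min ≤ m_max`, the minimum of `MSE` over `[m_min, m_max]` is attained at an
endpoint: at `m_min` if `MSE(m_min) ≤ MSE(m_max)`, and at `m_max` otherwise. -/
theorem one_erasure_mse_unimodal (M N : ℕ) (hM : 1 ≤ M) (hN : 1 ≤ N)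
    (σx σn : ℝ) (hσx : 0 < σx) (hσn : 0 < σn)
    (f : ℝ → ℝ)
    (hf : ∀ m : ℝ, f m =
      (M : ℝ) * σx ^ 2 * σn ^ 2 / ((N : ℝ) * m * σx ^ 2 / (M : ℝ) + σn ^ 2) +
        σx ^ 4 * (σx ^ 2 + σn ^ 2) * m /
          ((N : ℝ) * m * σx ^ 2 / (M : ℝ) + σn ^ 2) ^ 2) :
    (∃ mt : ℝ, 0 ≤ mt ∧ MonotoneOn f (Set.Ioc 0 mt) ∧ AntitoneOn f (Set.Ici mt)) ∧
    ∀ mmin mmax : ℝ, 0 < mmin → mmin ≤ mmax →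
      ((f mmin ≤ f mmax → ∀ m ∈ Set.Icc mmin mmax, f mmin ≤ f m) ∧
        (f mmax < f mmin → ∀ m ∈ Set.Icc mmin mmax, f mmax ≤ f m)) := by
  have hM0 : (0:ℝ) < (M:ℝ) := by
    have : (1:ℝ) ≤ (M:ℝ) := by exact_mod_cast hM
    linarith
  have hN0 : (0:ℝ) < (N:ℝ) := by
    have : (1:ℝ) ≤ (N:ℝ) := by exact_mod_cast hN
    linarith
  exact generic_unimodal ((M:ℝ)*σx^2*σn^2) (σx^4*(σx^2+σn^2)) ((N:ℝ)*σx^2/(M:ℝ))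
    (σn^2) (mul_pos (mul_pos hM0 (pow_pos hσx 2)) (pow_pos hσn 2))
    (mul_pos (pow_pos hσx 4) (add_pos (pow_pos hσx 2) (pow_pos hσn 2)))
    (div_pos (mul_pos hN0 (pow_pos hσx 2)) hM0) (pow_pos hσn 2) f
    (fun m => by rw [hf m]; ring)
end

section
/- Let N ≥ 2 and let W_1,…,W_N be m-dimensional subspaces of ℝ^M (1 ≤ m ≤ M). Then there exist indices i ≠ j such that d_c(W_i, W_j)² ≤ (m(M−m)/M) · (N/(N−1)). Equivalently, min_{i≠j} d_c(W_i,W_j)² ≤ (m(M−m)/M) · (N/(N−1)) (the simplex bound). -/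
open Matrix BigOperators

/-- The Frobenius norm of a real square matrix. -/
noncomputable def frobeniusNorm {M : ℕ} (X : Matrix (Fin M) (Fin M) ℝ) : ℝ :=
  Real.sqrt (Matrix.trace (Xᵀ * X))

/-- The chordal distance between two subspaces of `ℝ^M`, expressed in terms of their
orthogonal projection matrices: `d_c = (1/√2) ‖Q_V − Q_W‖_F`. -/
noncomputable def chordalDist {M : ℕ} (Q₁ Q₂ : Matrix (Fin M) (Fin M) ℝ) : ℝ :=
  (1 / Real.sqrt 2) * frobeniusNorm (Q₁ - Q₂)

lemma trace_proj_eq_finrank {M : ℕ} (P : Matrix (Fin M) (Fin M) ℝ)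
    (hidem : P * P = P) (W : Submodule ℝ (Fin M → ℝ))
    (hrange : LinearMap.range P.mulVecLin = W) :
    Matrix.trace P = (Module.finrank ℝ W : ℝ) := by
  subst hrange
  have hproj : LinearMap.IsProj (LinearMap.range P.mulVecLin) P.mulVecLin := by
    constructor
    · intro x; exact LinearMap.mem_range_self _ x
    · rintro x ⟨y, rfl⟩
      have : (P * P).mulVecLin y = P.mulVecLin y := by rw [hidem]
      simpa [Matrix.mulVecLin_mul] using this
  have := hproj.trace
  rw [← this]
  rw [LinearMap.trace_eq_matrix_trace ℝ (Pi.basisFun ℝ (Fin M)),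
    LinearMap.toMatrix_eq_toMatrix', ← Matrix.toLin'_apply', LinearMap.toMatrix'_toLin']

lemma trace_transpose_mul_self_nonneg {M : ℕ} (X : Matrix (Fin M) (Fin M) ℝ) :
    0 ≤ Matrix.trace (Xᵀ * X) := by
  have : Matrix.trace (Xᵀ * X) = ∑ i, ∑ k, (X k i) ^ 2 := by
    simp [Matrix.trace, Matrix.mul_apply, Matrix.diag, sq]
  rw [this]
  positivity

lemma chordalDist_sq {M : ℕ} (P Q : Matrix (Fin M) (Fin M) ℝ)
    (hP : P.IsSymm) (hQ : Q.IsSymm) (m : ℝ)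
    (hPt : Matrix.trace (P * P) = m) (hQt : Matrix.trace (Q * Q) = m) :
    chordalDist P Q ^ 2 = m - Matrix.trace (P * Q) := by
  have hX : (P - Q)ᵀ = P - Q := by
    rw [Matrix.transpose_sub, hP.eq, hQ.eq]
  have h2 : (0:ℝ) < 2 := by norm_num
  rw [chordalDist, mul_pow, frobeniusNorm,
    Real.sq_sqrt (trace_transpose_mul_self_nonneg _), hX]
  have hexp : (P - Q) * (P - Q) = P * P - P * Q - Q * P + Q * Q := by
    noncomm_ring
  rw [hexp]
  have hcomm : Matrix.trace (Q * P) = Matrix.trace (P * Q) := Matrix.trace_mul_comm Q P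
  rw [Matrix.trace_add, Matrix.trace_sub, Matrix.trace_sub, hPt, hQt, hcomm]
  rw [div_pow, one_pow, Real.sq_sqrt (by norm_num : (0:ℝ) ≤ 2)]
  ring

/-- **simplex bound.** Let `N ≥ 2` and let `W 1, …, W N` be
`m`-dimensional subspaces of `ℝ^M` (`1 ≤ m ≤ M`).  Then some pair `i ≠ j` satisfies
`d_c(Wᵢ, Wⱼ)² ≤ (m(M−m)/M) (N/(N−1))`. -/
theorem simplex_bound {M N m : ℕ} (hN : 2 ≤ N) (hm : 1 ≤ m) (hmM : m ≤ M)
    (W : Fin N → Submodule ℝ (Fin M → ℝ))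
    (P : Fin N → Matrix (Fin M) (Fin M) ℝ)
    (hP : ∀ i, (P i).IsSymm ∧ P i * P i = P i ∧
      LinearMap.range (P i).mulVecLin = W i)
    (hdim : ∀ i, Module.finrank ℝ (W i) = m) :
    ∃ i j, i ≠ j ∧
      chordalDist (P i) (P j) ^ 2 ≤
        ((m : ℝ) * ((M : ℝ) - (m : ℝ)) / (M : ℝ)) * ((N : ℝ) / ((N : ℝ) - 1)) := by
  classical
  set B : ℝ := ((m : ℝ) * ((M : ℝ) - (m : ℝ)) / (M : ℝ)) * ((N : ℝ) / ((N : ℝ) - 1)) with hB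
  by_contra hcon
  push_neg at hcon
  -- basic facts
  have hM0 : (0:ℝ) < (M:ℝ) := by
    have : 1 ≤ M := le_trans hm hmM
    exact_mod_cast Nat.lt_of_lt_of_le Nat.zero_lt_one this
  have hN1 : (1:ℝ) < (N:ℝ) := by exact_mod_cast lt_of_lt_of_le one_lt_two hN
  have htrP : ∀ i, Matrix.trace (P i) = (m : ℝ) := by
    intro i
    rw [trace_proj_eq_finrank (P i) (hP i).2.1 (W i) (hP i).2.2, hdim i]
  have htrPP : ∀ i, Matrix.trace (P i * P i) = (m : ℝ) := by
    intro i; rw [(hP i).2.1, htrP i]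
  -- chordal distance squared
  have hdist : ∀ i j, chordalDist (P i) (P j) ^ 2
      = (m:ℝ) - Matrix.trace (P i * P j) := fun i j =>
    chordalDist_sq (P i) (P j) (hP i).1 (hP j).1 (m:ℝ) (htrPP i) (htrPP j)
  -- from negated conclusion: trace bound on off-diagonal pairs
  have hkey : ∀ i j, i ≠ j → Matrix.trace (P i * P j) < (m:ℝ) - B := by
    intro i j hij
    have := hcon i j hij
    rw [hdist i j] at this
    linarith
  set S : Matrix (Fin M) (Fin M) ℝ := ∑ i, P i with hS
  have hSsymm : Sᵀ = S := by
    rw [hS, Matrix.transpose_sum]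
    exact Finset.sum_congr rfl fun i _ => (hP i).1.eq
  have htrS : Matrix.trace S = (N:ℝ) * (m:ℝ) := by
    rw [hS, Matrix.trace_sum]
    simp [htrP, Finset.card_univ]
  have htrSS : Matrix.trace (S * S) = ∑ i, ∑ j, Matrix.trace (P i * P j) := by
    rw [hS, Finset.sum_mul_sum, Matrix.trace_sum]
    exact Finset.sum_congr rfl fun i _ => by rw [Matrix.trace_sum]
  -- Cauchy–Schwarz: (tr S)^2 ≤ M * tr (S*S)
  have hCS : (Matrix.trace S) ^ 2 ≤ (M:ℝ) * Matrix.trace (S * S) := by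
    have h1 : Matrix.trace (S * S) = ∑ i, ∑ k, (S i k) ^ 2 := by
      have := trace_transpose_mul_self_nonneg S -- dummy
      calc Matrix.trace (S * S) = Matrix.trace (Sᵀ * S) := by rw [hSsymm]
        _ = ∑ i, ∑ k, (S k i) ^ 2 := by
            simp [Matrix.trace, Matrix.mul_apply, Matrix.diag, sq]
        _ = ∑ i, ∑ k, (S i k) ^ 2 := Finset.sum_comm
    have h2 : ∑ i, (S i i) ^ 2 ≤ ∑ i, ∑ k, (S i k) ^ 2 := by
      apply Finset.sum_le_sum
      intro i _
      exact Finset.single_le_sum (f := fun k => S i k ^ 2)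
        (fun k _ => sq_nonneg _) (Finset.mem_univ i)
    have h3 : (Matrix.trace S) ^ 2 ≤ (M:ℝ) * ∑ i, (S i i) ^ 2 := by
      have := sq_sum_le_card_mul_sum_sq (s := (Finset.univ : Finset (Fin M)))
        (f := fun i => S i i)
      simpa [Matrix.trace, Matrix.diag, Finset.card_univ] using this
    calc (Matrix.trace S) ^ 2 ≤ (M:ℝ) * ∑ i, (S i i) ^ 2 := h3
      _ ≤ (M:ℝ) * ∑ i, ∑ k, (S i k) ^ 2 := by
          apply mul_le_mul_of_nonneg_left h2 (le_of_lt hM0)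
      _ = (M:ℝ) * Matrix.trace (S * S) := by rw [h1]
  -- decompose the double sum into diagonal and off-diagonal
  have hsplit : ∑ i, ∑ j, Matrix.trace (P i * P j)
      = (∑ i, Matrix.trace (P i * P i))
        + ∑ p ∈ (Finset.univ : Finset (Fin N)).offDiag, Matrix.trace (P p.1 * P p.2) := by
    rw [← Finset.sum_product']
    rw [← Finset.diag_union_offDiag (Finset.univ : Finset (Fin N)),
      Finset.sum_union (Finset.disjoint_diag_offDiag _), Finset.sum_diag]
  have hdiag : ∑ i, Matrix.trace (P i * P i) = (N:ℝ) * (m:ℝ) := by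
    simp [htrPP, Finset.card_univ]
  -- off-diagonal sum strict bound
  have hne : ((Finset.univ : Finset (Fin N)).offDiag).Nonempty := by
    refine ⟨(⟨0, by omega⟩, ⟨1, by omega⟩), ?_⟩
    simp [Finset.mem_offDiag, Fin.ext_iff]
  have hoffcard : (((Finset.univ : Finset (Fin N)).offDiag).card : ℝ)
      = (N:ℝ) * ((N:ℝ) - 1) := by
    rw [Finset.offDiag_card]
    simp only [Finset.card_univ, Fintype.card_fin]
    have hNN : N ≤ N * N := Nat.le_mul_of_pos_left N (by omega)
    push_cast [Nat.cast_sub hNN]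
    ring
  have hoff : ∑ p ∈ (Finset.univ : Finset (Fin N)).offDiag, Matrix.trace (P p.1 * P p.2)
      < (N:ℝ) * ((N:ℝ) - 1) * ((m:ℝ) - B) := by
    calc ∑ p ∈ (Finset.univ : Finset (Fin N)).offDiag, Matrix.trace (P p.1 * P p.2)
        < ∑ _p ∈ (Finset.univ : Finset (Fin N)).offDiag, ((m:ℝ) - B) := by
          apply Finset.sum_lt_sum_of_nonempty hne
          intro p hp
          rw [Finset.mem_offDiag] at hp
          exact hkey p.1 p.2 hp.2.2
      _ = (N:ℝ) * ((N:ℝ) - 1) * ((m:ℝ) - B) := by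
          rw [Finset.sum_const, nsmul_eq_mul, hoffcard]
  -- combine
  have hlow : ((N:ℝ) * (m:ℝ)) ^ 2 / (M:ℝ) ≤ Matrix.trace (S * S) := by
    rw [← htrS]
    exact (div_le_iff₀' hM0).mpr hCS
  have heq : (N:ℝ) * ((N:ℝ) - 1) * ((m:ℝ) - B)
      = ((N:ℝ) * (m:ℝ)) ^ 2 / (M:ℝ) - (N:ℝ) * (m:ℝ) := by
    rw [hB]
    have hM : (M:ℝ) ≠ 0 := ne_of_gt hM0
    have hN1' : (N:ℝ) - 1 ≠ 0 := by linarith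
    field_simp
    ring
  have := htrSS
  rw [hsplit, hdiag] at this
  rw [this] at hlow
  linarith [hoff, heq ▸ hoff]
end

section
/- Let N ≥ 2 and let {W_i}_{i=1}^N be a tight fusion frame for ℝ^M consisting of m-dimensional subspaces whose pairwise chordal distances are all equal to a common value d_c. Then d_c² = (m(M−m)/M) · (N/(N−1)); that is, the common squared chordal distance attains the simplex bound. -/
open Matrix BigOperators

lemma trace_idem_eq_rank {M : ℕ} (X : Matrix (Fin M) (Fin M) ℝ) (hi : X * X = X) :
    Matrix.trace X = (Module.finrank ℝ (LinearMap.range X.mulVecLin) : ℝ) := by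
  have hproj : LinearMap.IsProj (LinearMap.range X.mulVecLin) X.mulVecLin := by
    constructor
    · intro x; exact LinearMap.mem_range_self _ x
    · rintro x ⟨y, rfl⟩
      have : X.mulVecLin (X.mulVecLin y) = (X*X).mulVecLin y := by
        simp [Matrix.mulVecLin_mul]
      rw [this, hi]
  have := hproj.trace (R := ℝ) (M := Fin M → ℝ)
  rw [← this]
  rw [LinearMap.trace_eq_matrix_trace ℝ (Pi.basisFun ℝ (Fin M))]
  congr 1
  rw [LinearMap.toMatrix_eq_toMatrix', ← Matrix.toLin'_apply' X, LinearMap.toMatrix'_toLin']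

/-- Let `N ≥ 2` and let `{W i}` be a tight fusion frame for `ℝ^M`
consisting of `m`-dimensional subspaces whose pairwise chordal distances all equal a
common value `d_c`.  Then `d_c² = (m(M−m)/M)(N/(N−1))`, the simplex bound. -/
theorem equidistance_tight_meets_simplex_bound {M N : ℕ} (hN : 2 ≤ N) (hM : 0 < M)
    (A : ℝ) (hA : 0 < A)
    (W : Fin N → Submodule ℝ (Fin M → ℝ))
    (P : Fin N → Matrix (Fin M) (Fin M) ℝ)
    (hP : ∀ i, (P i).IsSymm ∧ P i * P i = P i ∧
      LinearMap.range (P i).mulVecLin = W i)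
    (htight : ∑ i, P i = A • (1 : Matrix (Fin M) (Fin M) ℝ))
    (m : ℕ) (hdim : ∀ i, Module.finrank ℝ (W i) = m)
    (dc : ℝ) (hdc : ∀ i j, i ≠ j → chordalDist (P i) (P j) = dc) :
    dc ^ 2 = ((m : ℝ) * ((M : ℝ) - (m : ℝ)) / (M : ℝ)) * ((N : ℝ) / ((N : ℝ) - 1)) := by
  -- trace of each projection is m
  have htr : ∀ i, Matrix.trace (P i) = (m : ℝ) := by
    intro i
    rw [trace_idem_eq_rank _ (hP i).2.1, (hP i).2.2, hdim i]
  -- cross traces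
  have hcross : ∀ i j, i ≠ j → Matrix.trace (P i * P j) = (m : ℝ) - dc ^ 2 := by
    intro i j hij
    have hd := hdc i j hij
    have hexp : Matrix.trace ((P i - P j)ᵀ * (P i - P j)) =
        2 * (m : ℝ) - 2 * Matrix.trace (P i * P j) := by
      have hti : (P i)ᵀ = P i := (hP i).1
      have htj : (P j)ᵀ = P j := (hP j).1
      have : (P i - P j)ᵀ = P i - P j := by
        rw [Matrix.transpose_sub, hti, htj]
      rw [this, sub_mul, mul_sub, mul_sub]
      rw [Matrix.trace_sub, Matrix.trace_sub, Matrix.trace_sub]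
      rw [(hP i).2.1, (hP j).2.1, htr i, htr j, Matrix.trace_mul_comm (P j) (P i)]
      ring
    have hnn : 0 ≤ Matrix.trace ((P i - P j)ᵀ * (P i - P j)) :=
      trace_transpose_mul_self_nonneg _
    have hdc2 : dc ^ 2 = (1 / 2) * Matrix.trace ((P i - P j)ᵀ * (P i - P j)) := by
      rw [← hd, chordalDist, frobeniusNorm, mul_pow, Real.sq_sqrt hnn]
      rw [div_pow, one_pow, Real.sq_sqrt (by norm_num : (0:ℝ) ≤ 2)]
    rw [hdc2, hexp]; ring
  -- trace of the tight frame equation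
  have hAM : A * (M : ℝ) = (N : ℝ) * (m : ℝ) := by
    have := congrArg Matrix.trace htight
    rw [Matrix.trace_sum, Matrix.trace_smul, Matrix.trace_one] at this
    simp only [htr, Finset.sum_const, Finset.card_univ, Fintype.card_fin,
      nsmul_eq_mul, smul_eq_mul] at this
    linarith
  -- trace of square of the sum
  have hsq : A ^ 2 * (M : ℝ) =
      (N : ℝ) * (m : ℝ) + (N : ℝ) * ((N : ℝ) - 1) * ((m : ℝ) - dc ^ 2) := by
    have h1 : Matrix.trace ((∑ i, P i) * (∑ j, P j)) = A ^ 2 * (M : ℝ) := by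
      rw [htight, Matrix.smul_mul, Matrix.mul_smul, one_mul, smul_smul,
        Matrix.trace_smul, Matrix.trace_one]
      simp [Module.finrank_fintype_fun_eq_card, sq, mul_assoc]
    have h2 : Matrix.trace ((∑ i, P i) * (∑ j, P j)) =
        ∑ i, ∑ j, Matrix.trace (P i * P j) := by
      rw [Finset.sum_mul_sum, Matrix.trace_sum]
      exact Finset.sum_congr rfl fun i _ => Matrix.trace_sum _ _
    rw [← h1, h2]
    have h3 : ∀ i : Fin N, ∑ j, Matrix.trace (P i * P j) =
        (m : ℝ) + ((N : ℝ) - 1) * ((m : ℝ) - dc ^ 2) := by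
      intro i
      rw [← Finset.sum_erase_add _ _ (Finset.mem_univ i), (hP i).2.1, htr i,
        Finset.sum_congr rfl (fun j hj => hcross i j
          (fun h => (Finset.mem_erase.mp hj).1 h.symm)), Finset.sum_const,
        Finset.card_erase_of_mem (Finset.mem_univ i), Finset.card_univ, Fintype.card_fin,
        nsmul_eq_mul, Nat.cast_sub (by omega : 1 ≤ N)]
      push_cast
      ring
    rw [Finset.sum_congr rfl fun i _ => h3 i, Finset.sum_const]
    simp
    ring
  -- final algebra
  have hMpos : (0 : ℝ) < (M : ℝ) := Nat.cast_pos.mpr hM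
  have hNpos : (0 : ℝ) < (N : ℝ) := by positivity
  have hN1 : (0 : ℝ) < (N : ℝ) - 1 := by
    have : (2 : ℝ) ≤ (N : ℝ) := by exact_mod_cast hN
    linarith
  have hAeq : A = (N : ℝ) * (m : ℝ) / (M : ℝ) := by
    field_simp at hAM ⊢; linarith
  have key' : (N:ℝ) * (dc ^ 2 * ((M:ℝ) * ((N:ℝ) - 1))) =
      (N:ℝ) * ((m:ℝ) * ((M:ℝ) - (m:ℝ)) * (N:ℝ)) := by
    linear_combination (M:ℝ) * hsq - (A * (M:ℝ) + (N:ℝ) * (m:ℝ)) * hAM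
  have key := mul_left_cancel₀ hNpos.ne' key'
  field_simp
  linear_combination key
end

section
/- Let N ≥ 2 and let W_1,…,W_N be m-dimensional subspaces of ℝ^M whose pairwise chordal distances are all equal to the simplex bound, i.e. d_c(W_i,W_j)² = (m(M−m)/M) · (N/(N−1)) for all i ≠ j. Then {W_i}_{i=1}^N is a tight fusion frame for ℝ^M: Σ_{i=1}^N P_i = (Nm/M)·I, where P_i is the orthogonal projection onto W_i. -/
open Matrix BigOperators

lemma trace_transpose_mul_self {M : ℕ} (X : Matrix (Fin M) (Fin M) ℝ) :
    Matrix.trace (Xᵀ * X) = ∑ i, ∑ j, (X j i) ^ 2 := by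
  simp [Matrix.trace, Matrix.diag, Matrix.mul_apply, sq]

lemma eq_zero_of_trace {M : ℕ} (X : Matrix (Fin M) (Fin M) ℝ)
    (h : Matrix.trace (Xᵀ * X) = 0) : X = 0 := by
  rw [trace_transpose_mul_self] at h
  ext j i
  have h1 : ∀ i ∈ (Finset.univ : Finset (Fin M)), ∑ j, (X j i)^2 = 0 := by
    intro i _
    have := (Finset.sum_eq_zero_iff_of_nonneg (fun i _ => by positivity)).mp h
    exact this i (Finset.mem_univ i)
  have := (Finset.sum_eq_zero_iff_of_nonneg (fun j _ => by positivity)).mp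
    (h1 i (Finset.mem_univ i)) j (Finset.mem_univ j)
  simpa using pow_eq_zero_iff two_ne_zero |>.mp this

lemma trace_proj_s16 {M : ℕ} (Q : Matrix (Fin M) (Fin M) ℝ) (hQ : Q * Q = Q)
    (W : Submodule ℝ (Fin M → ℝ)) (hr : LinearMap.range Q.mulVecLin = W) :
    Matrix.trace Q = (Module.finrank ℝ W : ℝ) := by
  have hproj : LinearMap.IsProj W Q.mulVecLin := by
    constructor
    · intro x; rw [← hr]; exact ⟨x, rfl⟩
    · intro x hx
      rw [← hr] at hx; obtain ⟨y, rfl⟩ := hx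
      have h2 : (Q * Q).mulVecLin y = Q.mulVecLin (Q.mulVecLin y) := by
        rw [Matrix.mulVecLin_mul]; rfl
      rw [← h2, hQ]
  have ht := hproj.trace
  rw [LinearMap.trace_eq_matrix_trace ℝ (Pi.basisFun ℝ (Fin M)),
    LinearMap.toMatrix_eq_toMatrix', ← Matrix.toLin'_apply' Q,
    LinearMap.toMatrix'_toLin'] at ht
  exact ht

lemma chordalDist_sq_s16 {M : ℕ} (Q₁ Q₂ : Matrix (Fin M) (Fin M) ℝ) :
    chordalDist Q₁ Q₂ ^ 2 = (1/2) * Matrix.trace ((Q₁ - Q₂)ᵀ * (Q₁ - Q₂)) := by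
  rw [chordalDist, mul_pow, frobeniusNorm, div_pow, one_pow,
    Real.sq_sqrt (by norm_num : (0:ℝ) ≤ 2),
    Real.sq_sqrt (trace_transpose_mul_self_nonneg _)]

/-- Let `N ≥ 2` and let `W 1, …, W N` be `m`-dimensional subspaces of
`ℝ^M` whose pairwise squared chordal distances all equal the simplex bound
`(m(M−m)/M)(N/(N−1))`.  Then `{W i}` is a tight fusion frame:
`∑ᵢ Pᵢ = (Nm/M) • I`. -/
theorem simplex_bound_implies_tight {M N : ℕ} (hN : 2 ≤ N) (hM : 0 < M)
    (W : Fin N → Submodule ℝ (Fin M → ℝ))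
    (P : Fin N → Matrix (Fin M) (Fin M) ℝ)
    (hP : ∀ i, (P i).IsSymm ∧ P i * P i = P i ∧
      LinearMap.range (P i).mulVecLin = W i)
    (m : ℕ) (hdim : ∀ i, Module.finrank ℝ (W i) = m)
    (hdc : ∀ i j, i ≠ j →
      chordalDist (P i) (P j) ^ 2 =
        ((m : ℝ) * ((M : ℝ) - (m : ℝ)) / (M : ℝ)) * ((N : ℝ) / ((N : ℝ) - 1))) :
    ∑ i, P i = ((N : ℝ) * (m : ℝ) / (M : ℝ)) • (1 : Matrix (Fin M) (Fin M) ℝ) := by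
  set b : ℝ := ((m : ℝ) * ((M : ℝ) - (m : ℝ)) / (M : ℝ)) * ((N : ℝ) / ((N : ℝ) - 1)) with hb
  set c : ℝ := (N : ℝ) * (m : ℝ) / (M : ℝ) with hc
  have hMne : (M : ℝ) ≠ 0 := Nat.cast_ne_zero.mpr hM.ne'
  have hN1 : (N : ℝ) - 1 ≠ 0 := by
    have : (2:ℝ) ≤ (N:ℝ) := by exact_mod_cast hN
    linarith
  have htr : ∀ i, Matrix.trace (P i) = (m : ℝ) := fun i => by
    rw [trace_proj_s16 (P i) (hP i).2.1 (W i) (hP i).2.2, hdim i]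
  have htii : ∀ i, Matrix.trace (P i * P i) = (m : ℝ) := fun i => by
    rw [(hP i).2.1, htr i]
  have htij : ∀ i j, i ≠ j → Matrix.trace (P i * P j) = (m : ℝ) - b := by
    intro i j hij
    have h := hdc i j hij
    rw [chordalDist_sq_s16] at h
    have hT : (P i - P j)ᵀ = P i - P j := by
      rw [Matrix.transpose_sub, (hP i).1, (hP j).1]
    rw [hT, sub_mul, mul_sub, mul_sub, Matrix.trace_sub, Matrix.trace_sub,
      Matrix.trace_sub, htii, htii, Matrix.trace_mul_comm (P j) (P i)] at h
    linarith
  set S := ∑ i, P i with hS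
  set E := S - c • (1 : Matrix (Fin M) (Fin M) ℝ) with hE
  have hET : Eᵀ = E := by
    rw [hE, Matrix.transpose_sub, Matrix.transpose_smul, Matrix.transpose_one,
      hS, Matrix.transpose_sum]
    congr 1
    exact Finset.sum_congr rfl fun i _ => (hP i).1
  have htrS : Matrix.trace S = (N : ℝ) * m := by
    rw [hS, Matrix.trace_sum]
    simp [htr, Finset.sum_const, Finset.card_univ]
  have htrSS : Matrix.trace (S * S) = (N:ℝ) * m + (N:ℝ) * ((N:ℝ) - 1) * ((m:ℝ) - b) := by
    rw [hS, Finset.sum_mul_sum, Matrix.trace_sum]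
    have : ∀ i : Fin N, Matrix.trace (∑ j, P i * P j)
        = (m : ℝ) + ((N:ℝ) - 1) * ((m:ℝ) - b) := by
      intro i
      rw [Matrix.trace_sum, ← Finset.add_sum_erase _ _ (Finset.mem_univ i), htii]
      congr 1
      rw [Finset.sum_congr rfl (fun j hj => htij i j (Ne.symm (Finset.ne_of_mem_erase hj)))]
      rw [Finset.sum_const, Finset.card_erase_of_mem (Finset.mem_univ i),
        Finset.card_univ, Fintype.card_fin, nsmul_eq_mul,
        Nat.cast_sub (by omega : 1 ≤ N), Nat.cast_one]
    rw [Finset.sum_congr rfl (fun i _ => this i), Finset.sum_const, Finset.card_univ,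
      Fintype.card_fin, nsmul_eq_mul]
    ring
  have hEE : Matrix.trace (Eᵀ * E) = 0 := by
    rw [hET, hE, sub_mul, mul_sub, mul_sub, Matrix.trace_sub, Matrix.trace_sub,
      Matrix.trace_sub, Matrix.smul_mul, Matrix.mul_smul, Matrix.one_mul,
      Matrix.mul_one, Matrix.smul_mul, Matrix.one_mul, Matrix.trace_smul,
      Matrix.trace_smul, Matrix.trace_smul, Matrix.trace_one, Fintype.card_fin, htrSS, htrS]
    simp only [smul_eq_mul]
    rw [hb, hc]
    field_simp
    ring
  have hE0 : E = 0 := eq_zero_of_trace E hEE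
  have := sub_eq_zero.mp hE0
  rw [hS] at this
  exact this
end
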